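/- For the regular d-dimensional grid graph with all side lengths equal to n, for each integer z with 0 ≤ z ≤ n-1, the number λ = 1 + cos(πz/(n-1)) is an eigenvalue of the normalized Laplacian, with eigenvector whose component at node (x_1, ..., x_d) equals sqrt(deg(x_1, ..., x_d)) · Π_{j=1}^d (-1)^{x_j} cos((πz/(n-1))(x_j - 1)), where deg(x) = d + #{j : x_j ≠ 1 and x_j ≠ n}. -/

import Mathlib

open Real Matrix

/-! ### Auxiliary definitions and lemmas -/

/-- The per-coordinate eigenvector factor. -/
noncomputable def gg (θ : ℝ) (t : ℕ) : ℝ := (-1)^(t+1) * Real.cos (θ * t)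

lemma gg_mid (θ : ℝ) (m : ℕ) : gg θ m + gg θ (m+2) = -(2 * Real.cos θ) * gg θ (m+1) := by
  unfold gg
  have h1 : ((m+2:ℕ):ℝ) = ((m+1:ℕ):ℝ) + 1 := by push_cast; ring
  have h2 : ((m:ℕ):ℝ) = ((m+1:ℕ):ℝ) - 1 := by push_cast; ring
  rw [h1, h2, mul_add, mul_sub, mul_one, Real.cos_add, Real.cos_sub,
    pow_succ, pow_succ, pow_succ]
  ring

lemma gg_low (θ : ℝ) : gg θ 1 = -Real.cos θ * gg θ 0 := by
  unfold gg
  simp [Real.cos_zero]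

lemma gg_zero (θ : ℝ) : gg θ 0 = -1 := by
  unfold gg; simp

lemma gg_high (n z : ℕ) (hn : 2 ≤ n) (θ : ℝ) (hθ : θ * (((n:ℝ))-1) = z * π) :
    gg θ (n-2) = -Real.cos θ * gg θ (n-1) := by
  obtain ⟨m, rfl⟩ : ∃ m, n = m + 2 := ⟨n-2, by omega⟩
  have hm1 : (m+2-2 : ℕ) = m := by omega
  have hm2 : (m+2-1 : ℕ) = m+1 := by omega
  rw [hm1, hm2]
  have key : θ * ((m+1:ℕ):ℝ) = z * π := by
    rw [← hθ]; push_cast; ring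
  have hmm : θ * (m:ℕ) = z * π - θ := by
    have h : ((m:ℕ):ℝ) = ((m+1:ℕ):ℝ) - 1 := by push_cast; ring
    rw [h, mul_sub, key, mul_one]
  have c2 : Real.cos ((z:ℝ) * π) = (-1)^z := by
    rw [show (z:ℝ)*π = z*π - 0 by ring, Real.cos_nat_mul_pi_sub, Real.cos_zero, mul_one]
  unfold gg
  rw [key, hmm, Real.cos_nat_mul_pi_sub, c2, pow_succ, pow_succ]
  ring

lemma sum_pair_ite {α : Type*} [Fintype α] [DecidableEq α] (a b : α) (hab : a ≠ b) (F : α → ℝ) :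
    ∑ t, (if t = a ∨ t = b then F t else 0) = F a + F b := by
  have h : ∀ t : α, (t = a ∨ t = b) ↔ t ∈ ({a, b} : Finset α) := by
    intro t; simp
  calc ∑ t, (if t = a ∨ t = b then F t else 0)
      = ∑ t, (if t ∈ ({a,b} : Finset α) then F t else 0) := by
        exact Finset.sum_congr rfl fun t _ => if_congr (h t) rfl rfl
    _ = ∑ t ∈ ({a,b} : Finset α), F t := by
        rw [Finset.sum_ite_mem, Finset.univ_inter]
    _ = F a + F b := Finset.sum_pair hab

section Coord

variable {n : ℕ}

lemma nbr_sum_low (hn : 2 ≤ n) (s : Fin n) (h0 : (s:ℕ) = 0) (F : Fin n → ℝ) :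
    ∑ t : Fin n, (if (s:ℕ)+1 = (t:ℕ) ∨ (t:ℕ)+1 = (s:ℕ) then F t else 0) = F ⟨1, by omega⟩ := by
  have h : ∀ t : Fin n, ((s:ℕ)+1 = (t:ℕ) ∨ (t:ℕ)+1 = (s:ℕ)) ↔ t = ⟨1, by omega⟩ := by
    intro t
    constructor
    · rintro (h | h)
      · exact Fin.ext (by simp; omega)
      · omega
    · rintro rfl; left; simp; omega
  rw [Finset.sum_congr rfl fun t _ => if_congr (h t) rfl rfl]
  simp

lemma nbr_sum_high (hn : 2 ≤ n) (s : Fin n) (h1 : (s:ℕ) = n - 1) (F : Fin n → ℝ) :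
    ∑ t : Fin n, (if (s:ℕ)+1 = (t:ℕ) ∨ (t:ℕ)+1 = (s:ℕ) then F t else 0) = F ⟨n-2, by omega⟩ := by
  have h : ∀ t : Fin n, ((s:ℕ)+1 = (t:ℕ) ∨ (t:ℕ)+1 = (s:ℕ)) ↔ t = ⟨n-2, by omega⟩ := by
    intro t
    have := t.isLt
    constructor
    · rintro (h | h)
      · omega
      · exact Fin.ext (by simp; omega)
    · rintro rfl; right; simp; omega
  rw [Finset.sum_congr rfl fun t _ => if_congr (h t) rfl rfl]
  simp

lemma nbr_sum_mid (hn : 2 ≤ n) (s : Fin n) (h0 : (s:ℕ) ≠ 0) (h1 : (s:ℕ) ≠ n - 1) (F : Fin n → ℝ) :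
    ∑ t : Fin n, (if (s:ℕ)+1 = (t:ℕ) ∨ (t:ℕ)+1 = (s:ℕ) then F t else 0)
      = F ⟨(s:ℕ)+1, by have := s.isLt; omega⟩ + F ⟨(s:ℕ)-1, by have := s.isLt; omega⟩ := by
  have hlt := s.isLt
  have h : ∀ t : Fin n, ((s:ℕ)+1 = (t:ℕ) ∨ (t:ℕ)+1 = (s:ℕ)) ↔
      (t = ⟨(s:ℕ)+1, by omega⟩ ∨ t = ⟨(s:ℕ)-1, by omega⟩) := by
    intro t
    constructor
    · rintro (h | h)
      · left; exact Fin.ext (by simp; omega)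
      · right; exact Fin.ext (by simp; omega)
    · rintro (rfl | rfl)
      · left; simp
      · right; simp; omega
  rw [Finset.sum_congr rfl fun t _ => if_congr (h t) rfl rfl]
  exact sum_pair_ite _ _ (by intro h; have := congrArg Fin.val h; simp at this; omega) F

/-- Per-coordinate contribution to the degree. -/
noncomputable def degc (n : ℕ) (s : Fin n) : ℝ :=
  if (s:ℕ) = 0 ∨ (s:ℕ) = n-1 then 1 else 2

open scoped Classical in
lemma nbr_count (hn : 2 ≤ n) (s : Fin n) :
    ∑ t : Fin n, (if (s:ℕ)+1 = (t:ℕ) ∨ (t:ℕ)+1 = (s:ℕ) then (1:ℝ) else 0) = degc n s := by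
  by_cases h0 : (s:ℕ) = 0
  · rw [nbr_sum_low hn s h0]; unfold degc; rw [if_pos (Or.inl h0)]
  · by_cases h1 : (s:ℕ) = n-1
    · rw [nbr_sum_high hn s h1]; unfold degc; rw [if_pos (Or.inr h1)]
    · rw [nbr_sum_mid hn s h0 h1]; unfold degc
      rw [if_neg (by tauto)]; norm_num

open scoped Classical in
lemma nbr_gg (z : ℕ) (hn : 2 ≤ n) (θ : ℝ) (hθ : θ * (((n:ℝ))-1) = z * π) (s : Fin n) :
    ∑ t : Fin n, (if (s:ℕ)+1 = (t:ℕ) ∨ (t:ℕ)+1 = (s:ℕ) then gg θ (t:ℕ) else 0)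
      = -Real.cos θ * (degc n s * gg θ (s:ℕ)) := by
  by_cases h0 : (s:ℕ) = 0
  · rw [nbr_sum_low hn s h0 (fun t => gg θ (t:ℕ))]
    unfold degc
    rw [if_pos (Or.inl h0), h0]
    show gg θ 1 = _
    rw [gg_low]; ring
  · by_cases h1 : (s:ℕ) = n-1
    · rw [nbr_sum_high hn s h1 (fun t => gg θ (t:ℕ))]
      unfold degc
      rw [if_pos (Or.inr h1), h1]
      show gg θ (n-2) = _
      rw [gg_high n z hn θ hθ]; ring
    · rw [nbr_sum_mid hn s h0 h1 (fun t => gg θ (t:ℕ))]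
      unfold degc
      rw [if_neg (by tauto)]
      obtain ⟨m, hm⟩ : ∃ m, (s:ℕ) = m + 1 := ⟨(s:ℕ)-1, by omega⟩
      show gg θ ((s:ℕ)+1) + gg θ ((s:ℕ)-1) = _
      rw [hm, show m+1+1 = m+2 from rfl, show m+1-1 = m from rfl]
      have := gg_mid θ m
      linarith

end Coord

lemma ite_exists_eq_sum {d : ℕ} (P : Fin d → Prop) [DecidablePred P]
    (huniq : ∀ j j', P j → P j' → j = j') :
    (if ∃ j, P j then (1:ℝ) else 0) = ∑ j, if P j then 1 else 0 := by
  by_cases h : ∃ j, P j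
  · obtain ⟨j0, hj0⟩ := h
    rw [if_pos ⟨j0, hj0⟩, eq_comm, Finset.sum_eq_single j0]
    · rw [if_pos hj0]
    · intro j _ hne; exact if_neg (fun hP => hne (huniq j j0 hP hj0))
    · intro h; exact absurd (Finset.mem_univ j0) h
  · rw [if_neg h, eq_comm]
    exact Finset.sum_eq_zero fun j _ => if_neg (fun hP => h ⟨j, hP⟩)

open scoped Classical in
lemma fiber_sum {d n : ℕ} (x : Fin d → Fin n) (j : Fin d) (h : (Fin d → Fin n) → ℝ) :
    ∑ y : Fin d → Fin n, (if ((x j:ℕ)+1 = (y j:ℕ) ∨ (y j:ℕ)+1 = (x j:ℕ)) ∧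
        (∀ k, k ≠ j → x k = y k) then h y else 0)
    = ∑ t : Fin n, (if (x j:ℕ)+1 = (t:ℕ) ∨ (t:ℕ)+1 = (x j:ℕ)
        then h (Function.update x j t) else 0) := by
  rw [← Finset.sum_filter, ← Finset.sum_filter]
  refine Finset.sum_nbij' (fun y => y j) (fun t => Function.update x j t) ?_ ?_ ?_ ?_ ?_
  · intro y hy
    simp only [Finset.mem_filter, Finset.mem_univ, true_and] at hy ⊢
    exact hy.1
  · intro t ht
    simp only [Finset.mem_filter, Finset.mem_univ, true_and] at ht ⊢
    refine ⟨by simpa using ht, fun k hk => by simp [Function.update_of_ne hk]⟩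
  · intro y hy
    simp only [Finset.mem_filter, Finset.mem_univ, true_and] at hy
    show Function.update x j (y j) = y
    funext k
    by_cases hk : k = j
    · subst hk; simp
    · rw [Function.update_of_ne hk]; exact hy.2 k hk
  · intro t ht; simp
  · intro y hy
    simp only [Finset.mem_filter, Finset.mem_univ, true_and] at hy
    show h y = h (Function.update x j (y j))
    congr 1
    funext k
    by_cases hk : k = j
    · subst hk; simp
    · rw [Function.update_of_ne hk]; exact (hy.2 k hk).symm

open scoped Classical in
lemma key_sum {d n : ℕ} (x : Fin d → Fin n) (h : (Fin d → Fin n) → ℝ) :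
    ∑ y : Fin d → Fin n,
      (if ∃ j, ((x j:ℕ)+1 = (y j:ℕ) ∨ (y j:ℕ)+1 = (x j:ℕ)) ∧
        (∀ k, k ≠ j → x k = y k) then (1:ℝ) else 0) * h y
    = ∑ j, ∑ t : Fin n, (if (x j:ℕ)+1 = (t:ℕ) ∨ (t:ℕ)+1 = (x j:ℕ)
        then h (Function.update x j t) else 0) := by
  have huniq : ∀ y : Fin d → Fin n, ∀ j j',
      (((x j:ℕ)+1 = (y j:ℕ) ∨ (y j:ℕ)+1 = (x j:ℕ)) ∧ (∀ k, k ≠ j → x k = y k)) →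
      (((x j':ℕ)+1 = (y j':ℕ) ∨ (y j':ℕ)+1 = (x j':ℕ)) ∧ (∀ k, k ≠ j' → x k = y k)) →
      j = j' := by
    intro y j j' ⟨hadj, heq⟩ ⟨hadj', _⟩
    by_contra hne
    have hxy : x j' = y j' := heq j' (Ne.symm hne)
    have : (x j' : ℕ) = (y j' : ℕ) := congrArg Fin.val hxy
    omega
  calc ∑ y : Fin d → Fin n, (if ∃ j, ((x j:ℕ)+1 = (y j:ℕ) ∨ (y j:ℕ)+1 = (x j:ℕ)) ∧
          (∀ k, k ≠ j → x k = y k) then (1:ℝ) else 0) * h y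
      = ∑ y : Fin d → Fin n, ∑ j, (if ((x j:ℕ)+1 = (y j:ℕ) ∨ (y j:ℕ)+1 = (x j:ℕ)) ∧
          (∀ k, k ≠ j → x k = y k) then h y else 0) := by
        refine Finset.sum_congr rfl fun y _ => ?_
        rw [ite_exists_eq_sum _ (huniq y), Finset.sum_mul]
        exact Finset.sum_congr rfl fun j _ => by rw [ite_mul, one_mul, zero_mul]
    _ = ∑ j, ∑ y : Fin d → Fin n, (if ((x j:ℕ)+1 = (y j:ℕ) ∨ (y j:ℕ)+1 = (x j:ℕ)) ∧
          (∀ k, k ≠ j → x k = y k) then h y else 0) := Finset.sum_comm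
    _ = _ := Finset.sum_congr rfl fun j _ => fiber_sum x j h

lemma prod_update_gg {d n : ℕ} (θ : ℝ) (x : Fin d → Fin n) (j : Fin d) (t : Fin n) :
    ∏ k, gg θ ((Function.update x j t k : Fin n) : ℕ)
      = gg θ (t:ℕ) * ∏ k ∈ Finset.univ.erase j, gg θ ((x k : Fin n) : ℕ) := by
  calc ∏ k, gg θ ((Function.update x j t k : Fin n) : ℕ)
      = ∏ k, Function.update (fun k => gg θ ((x k : Fin n) : ℕ)) j (gg θ (t:ℕ)) k := by
        refine Finset.prod_congr rfl fun k _ => ?_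
        by_cases hk : k = j
        · subst hk; simp
        · simp [Function.update_of_ne hk]
    _ = _ := by
        rw [Finset.prod_update_of_mem (Finset.mem_univ j), Finset.erase_eq]

set_option maxHeartbeats 2000000 in
open scoped Classical in
/-- Closed-form normalized-Laplacian eigenpairs of the regular d-dimensional grid graph
    (all side lengths equal to `n`), for equal index components `z_j = z`. A vertex `x` has
    coordinates `x j + 1 ∈ {1,…,n}`, and its degree is
    `d + #{j : x j + 1 ≠ 1 ∧ x j + 1 ≠ n}`. -/
theorem regular_grid_normalized_eigenpair (d n : ℕ) (hd : 1 ≤ d) (hn : 2 ≤ n)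
    (z : ℕ) (hz : z ≤ n - 1)
    (A : Matrix (Fin d → Fin n) (Fin d → Fin n) ℝ)
    (hA : ∀ x y, A x y =
      if ∃ j, ((x j : ℕ) + 1 = (y j : ℕ) ∨ (y j : ℕ) + 1 = (x j : ℕ)) ∧
          ∀ k, k ≠ j → x k = y k then 1 else 0)
    (NL : Matrix (Fin d → Fin n) (Fin d → Fin n) ℝ)
    (hNL : NL = 1 - (Matrix.diagonal fun x => (Real.sqrt (∑ y, A x y))⁻¹) * A *
        (Matrix.diagonal fun x => (Real.sqrt (∑ y, A x y))⁻¹))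
    (v : (Fin d → Fin n) → ℝ)
    (hv : ∀ x, v x = Real.sqrt
          ((d : ℝ) + (Finset.univ.filter fun j => (x j : ℕ) ≠ 0 ∧ (x j : ℕ) ≠ n - 1).card) *
        ∏ j, (-1 : ℝ)^((x j : ℕ) + 1) *
          Real.cos ((π * z / (n - 1)) * (((x j : ℕ) : ℝ) + 1 - 1))) :
    NL.mulVec v = (1 + Real.cos (π * z / (n - 1))) • v ∧ v ≠ 0 := by
  set θ : ℝ := π * z / (n - 1) with hθdef
  have hn1 : ((n:ℝ)) - 1 ≠ 0 := by
    have : (2:ℝ) ≤ (n:ℝ) := by exact_mod_cast hn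
    linarith
  have hθ : θ * (((n:ℝ)) - 1) = z * π := by
    rw [hθdef]; field_simp
  set w : (Fin d → Fin n) → ℝ := fun x => ∏ j, gg θ ((x j : Fin n) : ℕ) with hw
  set deg : (Fin d → Fin n) → ℝ := fun x =>
    (d : ℝ) + (Finset.univ.filter fun j => (x j : ℕ) ≠ 0 ∧ (x j : ℕ) ≠ n - 1).card with hdeg
  have hvw : ∀ x, v x = Real.sqrt (deg x) * w x := by
    intro x
    rw [hv x, hw, hdeg]
    congr 1
    refine Finset.prod_congr rfl fun j _ => ?_
    unfold gg
    congr 2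
    ring
  have hdegc : ∀ x : Fin d → Fin n, ∑ j, degc n (x j) = deg x := by
    intro x
    have h1 : ∀ j, degc n (x j) =
        1 + (if (x j : ℕ) ≠ 0 ∧ (x j : ℕ) ≠ n-1 then (1:ℝ) else 0) := by
      intro j
      unfold degc
      by_cases h : (x j : ℕ) = 0 ∨ (x j : ℕ) = n-1
      · rw [if_pos h, if_neg (by tauto)]; norm_num
      · rw [if_neg h, if_pos (by tauto)]; norm_num
    rw [Finset.sum_congr rfl fun j _ => h1 j, Finset.sum_add_distrib, Finset.sum_boole,
      hdeg]
    simp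
  have hdeg_sum : ∀ x, ∑ y, A x y = deg x := by
    intro x
    calc ∑ y, A x y = ∑ y : Fin d → Fin n, (if ∃ j, ((x j : ℕ) + 1 = (y j : ℕ) ∨ (y j : ℕ) + 1 = (x j : ℕ)) ∧
          ∀ k, k ≠ j → x k = y k then (1:ℝ) else 0) * (fun _ => (1:ℝ)) y := by
          refine Finset.sum_congr rfl fun y _ => ?_
          rw [hA x y, mul_one]
      _ = ∑ j, ∑ t : Fin n, (if (x j:ℕ)+1 = (t:ℕ) ∨ (t:ℕ)+1 = (x j:ℕ) then (1:ℝ) else 0) :=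
          key_sum x _
      _ = ∑ j, degc n (x j) := Finset.sum_congr rfl fun j _ => nbr_count hn (x j)
      _ = deg x := hdegc x
  have hdeg_pos : ∀ x, 0 < deg x := by
    intro x
    have hx : deg x = (d : ℝ) +
        ((Finset.univ.filter fun j => (x j : ℕ) ≠ 0 ∧ (x j : ℕ) ≠ n - 1).card : ℝ) := rfl
    rw [hx]
    have h1 : (1:ℝ) ≤ (d:ℝ) := by exact_mod_cast hd
    have h2 : (0:ℝ) ≤ ((Finset.univ.filter fun j => (x j : ℕ) ≠ 0 ∧ (x j : ℕ) ≠ n - 1).card : ℝ) :=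
      Nat.cast_nonneg _
    linarith
  have hsqrt_pos : ∀ x, 0 < Real.sqrt (deg x) := fun x => Real.sqrt_pos.mpr (hdeg_pos x)
  have hAw : ∀ x, ∑ y, A x y * w y = -Real.cos θ * (deg x * w x) := by
    intro x
    calc ∑ y, A x y * w y
        = ∑ y : Fin d → Fin n, (if ∃ j, ((x j : ℕ) + 1 = (y j : ℕ) ∨ (y j : ℕ) + 1 = (x j : ℕ)) ∧
            ∀ k, k ≠ j → x k = y k then (1:ℝ) else 0) * w y := by
          refine Finset.sum_congr rfl fun y _ => ?_
          rw [hA x y]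
      _ = ∑ j, ∑ t : Fin n, (if (x j:ℕ)+1 = (t:ℕ) ∨ (t:ℕ)+1 = (x j:ℕ)
            then w (Function.update x j t) else 0) := key_sum x w
      _ = ∑ j, (-Real.cos θ * (degc n (x j) * gg θ ((x j : Fin n):ℕ))) *
            ∏ k ∈ Finset.univ.erase j, gg θ ((x k : Fin n) : ℕ) := by
          refine Finset.sum_congr rfl fun j _ => ?_
          calc ∑ t : Fin n, (if (x j:ℕ)+1 = (t:ℕ) ∨ (t:ℕ)+1 = (x j:ℕ)
                then w (Function.update x j t) else 0)
              = ∑ t : Fin n, (if (x j:ℕ)+1 = (t:ℕ) ∨ (t:ℕ)+1 = (x j:ℕ)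
                then gg θ (t:ℕ) else 0) * ∏ k ∈ Finset.univ.erase j, gg θ ((x k : Fin n):ℕ) := by
                refine Finset.sum_congr rfl fun t _ => ?_
                rw [ite_mul, zero_mul, hw]
                exact if_congr Iff.rfl (prod_update_gg θ x j t) rfl
            _ = _ := by rw [← Finset.sum_mul, nbr_gg z hn θ hθ (x j)]
      _ = ∑ j, -Real.cos θ * (degc n (x j) * w x) := by
          refine Finset.sum_congr rfl fun j _ => ?_
          have hwx : w x = gg θ ((x j : Fin n) : ℕ) *
              ∏ k ∈ Finset.univ.erase j, gg θ ((x k : Fin n) : ℕ) :=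
            (Finset.mul_prod_erase Finset.univ _ (Finset.mem_univ j)).symm
          rw [hwx]
          ring
      _ = -Real.cos θ * (deg x * w x) := by
          rw [← Finset.mul_sum]
          rw [show ∑ j, degc n (x j) * w x = (∑ j, degc n (x j)) * w x from
            (Finset.sum_mul _ _ _).symm, hdegc x]
  constructor
  · funext x
    rw [hNL, Matrix.sub_mulVec, Matrix.one_mulVec]
    have hentry : ∀ y, ((Matrix.diagonal fun x => (Real.sqrt (∑ y, A x y))⁻¹) * A *
        (Matrix.diagonal fun x => (Real.sqrt (∑ y, A x y))⁻¹)) x y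
        = (Real.sqrt (deg x))⁻¹ * A x y * (Real.sqrt (deg y))⁻¹ := by
      intro y
      rw [Matrix.mul_diagonal, Matrix.diagonal_mul, hdeg_sum x, hdeg_sum y]
    have hmv : ((Matrix.diagonal fun x => (Real.sqrt (∑ y, A x y))⁻¹) * A *
        (Matrix.diagonal fun x => (Real.sqrt (∑ y, A x y))⁻¹)).mulVec v x
        = (Real.sqrt (deg x))⁻¹ * ∑ y, A x y * w y := by
      rw [Matrix.mulVec, dotProduct]
      rw [Finset.sum_congr rfl fun y _ => by rw [hentry y]]
      rw [Finset.mul_sum]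
      refine Finset.sum_congr rfl fun y _ => ?_
      calc (Real.sqrt (deg x))⁻¹ * A x y * (Real.sqrt (deg y))⁻¹ * v y
          = (Real.sqrt (deg x))⁻¹ * (A x y * ((Real.sqrt (deg y))⁻¹ * v y)) := by ring
        _ = (Real.sqrt (deg x))⁻¹ * (A x y * w y) := by
            rw [hvw y, show (Real.sqrt (deg y))⁻¹ * (Real.sqrt (deg y) * w y) = w y from by
              rw [← mul_assoc, inv_mul_cancel₀ (hsqrt_pos y).ne', one_mul]]
    rw [Pi.sub_apply, hmv, hAw x, Pi.smul_apply, smul_eq_mul, hvw x]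
    have hds : (Real.sqrt (deg x))⁻¹ * (deg x) = Real.sqrt (deg x) := by
      have hms : Real.sqrt (deg x) * Real.sqrt (deg x) = deg x :=
        Real.mul_self_sqrt (hdeg_pos x).le
      calc (Real.sqrt (deg x))⁻¹ * (deg x)
          = (Real.sqrt (deg x))⁻¹ * (Real.sqrt (deg x) * Real.sqrt (deg x)) := by rw [hms]
        _ = Real.sqrt (deg x) := by
            rw [← mul_assoc, inv_mul_cancel₀ (hsqrt_pos x).ne', one_mul]
    linear_combination (Real.cos θ * w x) * hds
  · intro hzero
    have h0n : (0:ℕ) < n := by omega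
    set x0 : Fin d → Fin n := fun _ => ⟨0, h0n⟩ with hx0
    have hvx0 : v x0 = 0 := congrFun hzero x0
    rw [hvw x0] at hvx0
    have hw0 : w x0 = (-1)^d := by
      have hb : ∀ j : Fin d, gg θ ((x0 j : Fin n) : ℕ) = -1 := fun j => gg_zero θ
      rw [hw]
      show (∏ j : Fin d, gg θ ((x0 j : Fin n) : ℕ)) = (-1)^d
      rw [Finset.prod_congr rfl fun j _ => hb j, Finset.prod_const]
      simp
    rw [hw0] at hvx0
    exact mul_ne_zero (hsqrt_pos x0).ne'
      (pow_ne_zero d (by norm_num : (-1:ℝ) ≠ 0)) hvx0
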